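/- Let n and B be positive integers with B < n, let A be a real number with 1 ≤ A < n, and assume A + B ≤ n. Let 𝒜 ⊆ ℝⁿ be the set of tuples a = (a₁, …, a_n) such that: for every i, a_i = 0 or a_i ≥ 1; a₁ ≤ A; Σ_{i=1}^n a_i = n; and for each i ≥ 2, either a_i = 0 or the number of indices t ≥ 2 with a_t = a_i is at least B. For a ∈ 𝒜 let R(a) be the number of indices i ≥ 2 with a_i ≠ 0. Then the maximum over a ∈ 𝒜 of R(a) + Σ_{i=1}^n a_i² is attained and equals B + A² + (n−A)²/B if A(B+1) ≥ 2n, and equals B + n²/B if A(B+1) ≤ 2n. -/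

import Mathlib

open Finset in
lemma ub_aux (n B : ℕ) (hB : 0 < B) (hBn : B < n) (A : ℝ) (hAn : A < n)
    (a : Fin n → ℝ) (h1 : ∀ i, a i = 0 ∨ 1 ≤ a i)
    (h2 : ∀ i : Fin n, (i : ℕ) = 0 → a i ≤ A)
    (h3 : (∑ i, a i) = n)
    (h4 : ∀ i : Fin n, (i : ℕ) ≠ 0 →
      (a i = 0 ∨ B ≤ {t : Fin n | (t : ℕ) ≠ 0 ∧ a t = a i}.ncard)) :
    ∃ x : ℝ, 0 ≤ x ∧ x ≤ A ∧
      (({i : Fin n | (i : ℕ) ≠ 0 ∧ a i ≠ 0}.ncard : ℝ) + ∑ i, (a i) ^ 2)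
        ≤ x ^ 2 + ((n : ℝ) - x) ^ 2 / B + B := by
  classical
  have hn : 0 < n := lt_trans hB hBn
  set i0 : Fin n := ⟨0, hn⟩ with hi0
  set x := a i0 with hx
  have hnn : ∀ i, 0 ≤ a i := fun i => (h1 i).elim (fun h => le_of_eq h.symm)
    (fun h => le_trans zero_le_one h)
  refine ⟨x, hnn i0, h2 i0 rfl, ?_⟩
  set Q : Finset (Fin n) := univ.filter (fun i => (i : ℕ) ≠ 0 ∧ a i ≠ 0) with hQ
  have hsetQ : {i : Fin n | (i : ℕ) ≠ 0 ∧ a i ≠ 0}.ncard = Q.card := by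
    rw [hQ]
    rw [← Set.ncard_coe_finset]
    congr 1
    ext i
    simp
  have hQsub : Q ⊆ univ.erase i0 := by
    intro i hi
    simp only [hQ, mem_filter] at hi
    exact mem_erase.2 ⟨fun h => hi.2.1 (by simp [h, hi0]), mem_univ i⟩
  have hone : ∀ i ∈ Q, 1 ≤ a i := by
    intro i hi
    simp only [hQ, mem_filter] at hi
    exact (h1 i).resolve_left hi.2.2
  set S := ∑ i ∈ Q, a i with hSdef
  have hS : S = (n : ℝ) - x := by
    have hsplit : ∑ i ∈ univ.erase i0, a i = (∑ i, a i) - x := by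
      rw [← Finset.add_sum_erase univ a (mem_univ i0)]; ring
    have hext : ∑ i ∈ univ.erase i0, a i = S := by
      rw [hSdef]
      refine (Finset.sum_subset hQsub ?_).symm
      intro i hi hiQ
      simp only [hQ, mem_filter, mem_univ, true_and, not_and, not_not] at hiQ
      have : (i : ℕ) ≠ 0 := by
        intro h
        exact (mem_erase.1 hi).1 (Fin.ext h)
      exact hiQ this
    rw [← hext, hsplit, h3]
  have hRS : (Q.card : ℝ) ≤ S := by
    rw [hSdef]
    calc (Q.card : ℝ) = ∑ _i ∈ Q, (1 : ℝ) := by simp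
    _ ≤ ∑ i ∈ Q, a i := Finset.sum_le_sum hone
  have hSpos : 0 < S := by
    rw [hS]
    have := h2 i0 rfl
    linarith
  have hQne : Q.Nonempty := by
    by_contra h
    rw [not_nonempty_iff_eq_empty] at h
    rw [hSdef, h] at hSpos
    simp at hSpos
  -- B ≤ Q.card
  have hBR : B ≤ Q.card := by
    obtain ⟨i1, hi1⟩ := hQne
    have hi1' := hi1
    simp only [hQ, mem_filter] at hi1'
    have := (h4 i1 hi1'.2.1).resolve_left hi1'.2.2
    refine le_trans this ?_
    have hsub : {t : Fin n | (t : ℕ) ≠ 0 ∧ a t = a i1} ⊆ (Q : Set (Fin n)) := by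
      intro t ht
      simp only [Set.mem_setOf_eq] at ht
      simp only [hQ, coe_filter, Set.mem_setOf_eq, mem_univ, true_and]
      exact ⟨ht.1, ht.2 ▸ hi1'.2.2⟩
    calc {t : Fin n | (t : ℕ) ≠ 0 ∧ a t = a i1}.ncard
        ≤ (Q : Set (Fin n)).ncard := Set.ncard_le_ncard hsub (Q : Set (Fin n)).toFinite
      _ = Q.card := Set.ncard_coe_finset Q
  -- B * a i ≤ S for i in Q
  have hkey : ∀ i ∈ Q, (B : ℝ) * a i ≤ S := by
    intro i hi
    have hi' := hi
    simp only [hQ, mem_filter] at hi'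
    set T : Finset (Fin n) := univ.filter (fun t => (t : ℕ) ≠ 0 ∧ a t = a i) with hT
    have hTQ : T ⊆ Q := by
      intro t ht
      simp only [hT, mem_filter] at ht
      simp only [hQ, mem_filter]
      exact ⟨mem_univ t, ht.2.1, ht.2.2 ▸ hi'.2.2⟩
    have hBT : B ≤ T.card := by
      have := (h4 i hi'.2.1).resolve_left hi'.2.2
      refine le_trans this (le_of_eq ?_)
      rw [← Set.ncard_coe_finset]
      congr 1
      ext t
      simp [hT]
    have hTsum : ∑ t ∈ T, a t = (T.card : ℝ) * a i := by
      rw [Finset.sum_congr rfl (fun t ht => ?_), Finset.sum_const, nsmul_eq_mul]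
      simp only [hT, mem_filter] at ht
      exact ht.2.2
    calc (B : ℝ) * a i ≤ (T.card : ℝ) * a i := by
          apply mul_le_mul_of_nonneg_right _ (hnn i)
          exact_mod_cast hBT
      _ = ∑ t ∈ T, a t := hTsum.symm
      _ ≤ S := Finset.sum_le_sum_of_subset_of_nonneg hTQ (fun t _ _ => hnn t)
  have hBpos : (0 : ℝ) < B := by exact_mod_cast hB
  -- per-term bound, summed
  have hsum2 : (B : ℝ) * ((∑ i ∈ Q, (a i)^2) + Q.card) ≤ S^2 + (B:ℝ)^2 := by
    have hterm : ∀ i ∈ Q, (B:ℝ) * ((a i)^2 + 1) ≤ (S + B) * a i - S + B := by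
      intro i hi
      have h1i := hone i hi
      have h2i := hkey i hi
      nlinarith [mul_nonneg (sub_nonneg.2 h1i) (sub_nonneg.2 h2i)]
    have hsum : ∑ i ∈ Q, (B:ℝ) * ((a i)^2 + 1) ≤ ∑ i ∈ Q, ((S + B) * a i - S + B) :=
      Finset.sum_le_sum hterm
    have hL : ∑ i ∈ Q, (B:ℝ) * ((a i)^2 + 1) = (B:ℝ) * ((∑ i ∈ Q, (a i)^2) + Q.card) := by
      rw [Finset.sum_congr rfl (fun i _ => by ring :
        ∀ i ∈ Q, (B:ℝ) * ((a i)^2 + 1) = (B:ℝ) * (a i)^2 + B),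
        Finset.sum_add_distrib, ← Finset.mul_sum, Finset.sum_const, nsmul_eq_mul]
      ring
    have hR : ∑ i ∈ Q, ((S + (B:ℝ)) * a i - S + B) = (S + B) * S + (Q.card : ℝ) * (B - S) := by
      rw [Finset.sum_congr rfl (fun i _ => by ring :
        ∀ i ∈ Q, (S + (B:ℝ)) * a i - S + B = (S + B) * a i + (B - S)),
        Finset.sum_add_distrib, ← Finset.mul_sum, Finset.sum_const, nsmul_eq_mul, ← hSdef]
    rw [hL, hR] at hsum
    have hBR' : (B : ℝ) ≤ Q.card := by exact_mod_cast hBR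
    nlinarith [mul_nonneg (sub_nonneg.2 hBR') (sub_nonneg.2 (le_trans hBR' hRS))]
  -- split the sum of squares
  have hsq : ∑ i, (a i)^2 = x^2 + ∑ i ∈ Q, (a i)^2 := by
    have hsplit : ∑ i ∈ univ.erase i0, (a i)^2 = (∑ i, (a i)^2) - x^2 := by
      rw [← Finset.add_sum_erase univ (fun i => (a i)^2) (mem_univ i0)]; ring
    have hext : ∑ i ∈ univ.erase i0, (a i)^2 = ∑ i ∈ Q, (a i)^2 := by
      refine (Finset.sum_subset hQsub ?_).symm
      intro i hi hiQ
      simp only [hQ, mem_filter, mem_univ, true_and, not_and, not_not] at hiQ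
      have hi0' : (i : ℕ) ≠ 0 := fun h => (mem_erase.1 hi).1 (Fin.ext h)
      rw [hiQ hi0']; ring
    linarith [hext, hsplit]
  rw [hsetQ, hsq]
  have hdiv : (∑ i ∈ Q, (a i)^2) + (Q.card : ℝ) ≤ S^2 / B + B := by
    have h1' : (∑ i ∈ Q, (a i)^2) + (Q.card : ℝ) ≤ (S^2 + (B:ℝ)^2) / B :=
      (le_div_iff₀ hBpos).2 (by nlinarith [hsum2])
    have h2' : (S^2 + (B:ℝ)^2) / B = S^2 / B + B := by field_simp
    linarith
  rw [← hS]
  linarith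


open Finset in
lemma mem_aux (n B : ℕ) (hB : 0 < B) (hBn : B < n) (A : ℝ) (c v : ℝ)
    (hc0 : c = 0 ∨ 1 ≤ c) (hcA : c ≤ A) (hv : 1 ≤ v) (hsum : c + B * v = n) :
    ∃ a : Fin n → ℝ,
      ((∀ i, a i = 0 ∨ 1 ≤ a i) ∧
        (∀ i : Fin n, (i : ℕ) = 0 → a i ≤ A) ∧
        (∑ i, a i) = n ∧
        (∀ i : Fin n, (i : ℕ) ≠ 0 →
          (a i = 0 ∨ B ≤ {t : Fin n | (t : ℕ) ≠ 0 ∧ a t = a i}.ncard))) ∧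
      (({i : Fin n | (i : ℕ) ≠ 0 ∧ a i ≠ 0}.ncard : ℝ) + ∑ i, (a i) ^ 2)
        = (B : ℝ) + c ^ 2 + (B : ℝ) * v ^ 2 := by
  classical
  have hn : 0 < n := lt_trans hB hBn
  have hv0 : v ≠ 0 := by linarith
  set a : Fin n → ℝ := fun i => if (i : ℕ) = 0 then c else if (i : ℕ) ≤ B then v else 0
    with ha
  set i0 : Fin n := ⟨0, hn⟩ with hi0
  set T : Finset (Fin n) := univ.filter (fun i => (i : ℕ) ≠ 0 ∧ (i : ℕ) ≤ B) with hT
  have hcardT : T.card = B := by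
    have heq : T.card = (Finset.Icc 1 B).card := by
      rw [hT]
      apply Finset.card_bij (fun (i : Fin n) _ => (i : ℕ))
      · intro i hi
        simp only [mem_filter, mem_univ, true_and] at hi
        exact Finset.mem_Icc.2 ⟨Nat.one_le_iff_ne_zero.2 hi.1, hi.2⟩
      · intro i hi j hj hij
        exact Fin.ext hij
      · intro k hk
        rw [Finset.mem_Icc] at hk
        refine ⟨⟨k, lt_of_le_of_lt hk.2 hBn⟩, ?_, rfl⟩
        simp only [mem_filter, mem_univ, true_and]
        exact ⟨Nat.one_le_iff_ne_zero.1 hk.1, hk.2⟩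
    simpa using heq
  have haT : ∀ i : Fin n, (i : ℕ) ≠ 0 → (a i ≠ 0 ↔ i ∈ T) := by
    intro i hi
    simp only [ha, hi, if_neg hi, hT, mem_filter, mem_univ, true_and]
    constructor
    · intro h
      refine ⟨hi, ?_⟩
      by_contra hle
      exact h (if_neg hle)
    · intro h
      rw [if_pos h.2]
      exact hv0
  have haval : ∀ i ∈ T, a i = v := by
    intro i hi
    simp only [hT, mem_filter, mem_univ, true_and] at hi
    simp [ha, hi.1, hi.2]
  -- sums
  have hsum_gen : ∀ g : ℝ → ℝ, g 0 = 0 → ∑ i, g (a i) = g c + B * g v := by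
    intro g hg0
    have hpt : ∀ i : Fin n, g (a i) =
        (if i = i0 then g c else 0) + (if i ∈ T then g v else 0) := by
      intro i
      by_cases h0 : (i : ℕ) = 0
      · have : i = i0 := Fin.ext h0
        subst this
        have hnT : i0 ∉ T := by simp [hT, h0]
        simp [ha, h0, hnT]
      · have : i ≠ i0 := fun h => h0 (congrArg Fin.val h)
        by_cases hTm : i ∈ T
        · rw [if_neg this, if_pos hTm, haval i hTm, zero_add]
        · rw [if_neg this, if_neg hTm, zero_add]
          have : a i = 0 := by
            by_contra h
            exact hTm ((haT i h0).1 h)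
          rw [this, hg0]
    rw [Finset.sum_congr rfl (fun i _ => hpt i), Finset.sum_add_distrib,
      Finset.sum_ite_eq' univ i0, if_pos (mem_univ i0)]
    congr 1
    rw [Finset.sum_ite_mem, Finset.univ_inter, Finset.sum_const, hcardT, nsmul_eq_mul]
  have hsum1 : ∑ i, a i = (n : ℝ) := by
    have h : ∑ i, a i = c + (B : ℝ) * v := hsum_gen (fun t => t) rfl
    rw [h, hsum]
  constructor
  constructor
  · -- the four constraints
    refine ⟨?_, ?_, hsum1, ?_⟩
    · intro i
      by_cases h0 : (i : ℕ) = 0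
      · simp only [ha, if_pos h0]; exact hc0
      · by_cases hle : (i : ℕ) ≤ B
        · right; simp only [ha, if_neg h0, if_pos hle]; exact hv
        · left; simp [ha, h0, hle]
    · intro i h0
      simp only [ha, if_pos h0]; exact hcA
    · intro i h0
      by_cases hle : (i : ℕ) ≤ B
      · right
        have hset : {t : Fin n | (t : ℕ) ≠ 0 ∧ a t = a i} = (T : Set (Fin n)) := by
          have hai : a i = v := haval i (by simp [hT, h0, hle])
          ext t
          simp only [Set.mem_setOf_eq, Finset.coe_filter, hT, mem_univ, true_and,
            Set.mem_setOf_eq]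
          constructor
          · rintro ⟨ht0, htv⟩
            refine ⟨ht0, ?_⟩
            rw [hai] at htv
            by_contra hgt
            rw [ha] at htv
            simp only [if_neg ht0, if_neg hgt] at htv
            exact hv0 htv.symm
          · rintro ⟨ht0, htB⟩
            exact ⟨ht0, by rw [haval t (by simp [hT, ht0, htB]), hai]⟩
        rw [hset, Set.ncard_coe_finset, hcardT]
      · left; simp [ha, h0, hle]
  · -- the value
    have hset : {i : Fin n | (i : ℕ) ≠ 0 ∧ a i ≠ 0} = (T : Set (Fin n)) := by
      ext i
      simp only [Set.mem_setOf_eq, Finset.coe_filter, hT, mem_univ, true_and,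
        Set.mem_setOf_eq]
      constructor
      · rintro ⟨h0, hne⟩
        have hm := (haT i h0).1 hne
        simp only [hT, mem_filter, mem_univ, true_and] at hm
        exact ⟨h0, hm.2⟩
      · rintro ⟨h0, hle⟩
        exact ⟨h0, (haT i h0).2 (by simp [hT, h0, hle])⟩
    rw [hset, Set.ncard_coe_finset, hcardT]
    have h : ∑ i, (a i)^2 = c^2 + (B : ℝ) * v^2 := hsum_gen (fun t => t^2) (by norm_num)
    rw [h]
    ring

/-- Lemma 5.5 (optimization lemma): the maximum of `R(a) + ∑ aᵢ²` over the set `𝒜` of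
tuples described in the paper. Indices are `Fin n`, with `a₁` corresponding to index `0`
and "`i ≥ 2`" to indices `i ≠ 0`. -/
theorem optimization_lemma (n B : ℕ) (hB : 0 < B) (hBn : B < n)
    (A : ℝ) (hA1 : 1 ≤ A) (hAn : A < n) (hAB : A + B ≤ (n : ℝ)) :
    (2 * (n : ℝ) ≤ A * (B + 1) →
      IsGreatest
        ((fun a : Fin n → ℝ =>
            (({i : Fin n | (i : ℕ) ≠ 0 ∧ a i ≠ 0}.ncard : ℝ) + ∑ i, (a i) ^ 2)) ''
          {a : Fin n → ℝ |
            (∀ i, a i = 0 ∨ 1 ≤ a i) ∧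
            (∀ i : Fin n, (i : ℕ) = 0 → a i ≤ A) ∧
            (∑ i, a i) = n ∧
            (∀ i : Fin n, (i : ℕ) ≠ 0 →
              (a i = 0 ∨ B ≤ {t : Fin n | (t : ℕ) ≠ 0 ∧ a t = a i}.ncard))})
        ((B : ℝ) + A ^ 2 + ((n : ℝ) - A) ^ 2 / B)) ∧
    (A * (B + 1) ≤ 2 * (n : ℝ) →
      IsGreatest
        ((fun a : Fin n → ℝ =>
            (({i : Fin n | (i : ℕ) ≠ 0 ∧ a i ≠ 0}.ncard : ℝ) + ∑ i, (a i) ^ 2)) ''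
          {a : Fin n → ℝ |
            (∀ i, a i = 0 ∨ 1 ≤ a i) ∧
            (∀ i : Fin n, (i : ℕ) = 0 → a i ≤ A) ∧
            (∑ i, a i) = n ∧
            (∀ i : Fin n, (i : ℕ) ≠ 0 →
              (a i = 0 ∨ B ≤ {t : Fin n | (t : ℕ) ≠ 0 ∧ a t = a i}.ncard))})
        ((B : ℝ) + (n : ℝ) ^ 2 / B)) := by
  have hBpos : (0 : ℝ) < B := by exact_mod_cast hB
  have hBne : (B : ℝ) ≠ 0 := ne_of_gt hBpos
  constructor
  · intro hcase
    constructor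
    · -- membership: witness with c = A, v = (n - A)/B
      have hv : 1 ≤ ((n : ℝ) - A) / B := by
        rw [le_div_iff₀ hBpos]; linarith
      have hsum : A + (B : ℝ) * (((n : ℝ) - A) / B) = n := by
        field_simp
        ring
      obtain ⟨a, hmem, hval⟩ :=
        mem_aux n B hB hBn A A (((n : ℝ) - A) / B) (Or.inr hA1) le_rfl hv hsum
      refine ⟨a, hmem, ?_⟩
      simp only
      rw [hval]
      field_simp
    · -- upper bound
      rintro y ⟨a, ⟨ha1, ha2, ha3, ha4⟩, rfl⟩
      obtain ⟨x, hx0, hxA, hle⟩ := ub_aux n B hB hBn A hAn a ha1 ha2 ha3 ha4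
      have hint : 0 ≤ ((B : ℝ) + 1) * (A + x) - 2 * n := by nlinarith
      have key : (((n : ℝ) - x) ^ 2 - ((n : ℝ) - A) ^ 2) / B ≤ A ^ 2 - x ^ 2 := by
        rw [div_le_iff₀ hBpos]
        nlinarith [mul_nonneg (sub_nonneg.2 hxA) hint]
      have hsplit : ((n : ℝ) - x) ^ 2 / B
          = ((n : ℝ) - A) ^ 2 / B + (((n : ℝ) - x) ^ 2 - ((n : ℝ) - A) ^ 2) / B := by
        ring
      simp only
      linarith
  · intro hcase
    constructor
    · -- membership: witness with c = 0, v = n/B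
      have hv : 1 ≤ (n : ℝ) / B := by
        rw [le_div_iff₀ hBpos]
        have : (B : ℝ) ≤ n := by exact_mod_cast le_of_lt hBn
        linarith
      have hsum : 0 + (B : ℝ) * ((n : ℝ) / B) = n := by field_simp; ring
      obtain ⟨a, hmem, hval⟩ :=
        mem_aux n B hB hBn A 0 ((n : ℝ) / B) (Or.inl rfl) (by linarith) hv hsum
      refine ⟨a, hmem, ?_⟩
      simp only
      rw [hval]
      field_simp
      ring
    · rintro y ⟨a, ⟨ha1, ha2, ha3, ha4⟩, rfl⟩
      obtain ⟨x, hx0, hxA, hle⟩ := ub_aux n B hB hBn A hAn a ha1 ha2 ha3 ha4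
      have hint : ((B : ℝ) + 1) * x - 2 * n ≤ 0 := by nlinarith
      have key : x ^ 2 ≤ ((n : ℝ) ^ 2 - ((n : ℝ) - x) ^ 2) / B := by
        rw [le_div_iff₀ hBpos]
        nlinarith [mul_nonneg hx0 (neg_nonneg.2 hint)]
      have hsplit : ((n : ℝ) - x) ^ 2 / B
          = (n : ℝ) ^ 2 / B - ((n : ℝ) ^ 2 - ((n : ℝ) - x) ^ 2) / B := by
        ring
      simp only
      linarith
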